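/- Characterization of steady states, stable case: Suppose T₁ ≥ T₀. Then every smooth steady solution (v, T, q) of the perturbation primitive equations satisfies v ≡ 0 and T ≡ 0 on Ω. -/

import Mathlib

noncomputable section

open Real

/-- Partial derivative in x of a function of (x, z). -/
def px2 (f : ℝ → ℝ → ℝ) : ℝ → ℝ → ℝ := fun x z => deriv (fun y => f y z) x

/-- Partial derivative in z of a function of (x, z). -/
def pz2 (f : ℝ → ℝ → ℝ) : ℝ → ℝ → ℝ := fun x z => deriv (fun w => f x w) z

/-- A smooth steady solution (v, T, q) of the perturbation primitive equations on the
strip ℝ × [0, H], periodic in x with period L: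

v ∂ₓv − (∫₀^z ∂ₓv dξ) ∂_z v
    = ν_x ∂ₓ²v + ν_z ∂_z²v − g ρ₀ β ∂ₓ(∫₀^z T dξ) − ∂ₓq,
v ∂ₓT − (∫₀^z ∂ₓv dξ) ∂_z T
    = κ_x ∂ₓ²T + κ_z ∂_z²T + ((T₁ − T₀)/H) ∫₀^z ∂ₓv dξ,

with boundary conditions ∂_z v = 0 at z = 0, H; T = 0 at z = 0, H; and
∫₀^H v dz = 0. -/
structure SteadySolution (νx νz κx κz g ρ₀ β H L T₀ T₁ : ℝ)
    (v T : ℝ → ℝ → ℝ) (q : ℝ → ℝ) : Prop where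
  smooth_v : ContDiff ℝ (⊤ : ℕ∞) (fun p : ℝ × ℝ => v p.1 p.2)
  smooth_T : ContDiff ℝ (⊤ : ℕ∞) (fun p : ℝ × ℝ => T p.1 p.2)
  smooth_q : ContDiff ℝ (⊤ : ℕ∞) q
  periodic_v : ∀ x z, v (x + L) z = v x z
  periodic_T : ∀ x z, T (x + L) z = T x z
  periodic_q : ∀ x, q (x + L) = q x
  momentum : ∀ (x : ℝ), ∀ z ∈ Set.Icc (0:ℝ) H,
    v x z * px2 v x z - (∫ ξ in (0:ℝ)..z, px2 v x ξ) * pz2 v x z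
      = νx * px2 (px2 v) x z + νz * pz2 (pz2 v) x z
        - g * ρ₀ * β * px2 (fun x z => ∫ ξ in (0:ℝ)..z, T x ξ) x z
        - deriv q x
  heat : ∀ (x : ℝ), ∀ z ∈ Set.Icc (0:ℝ) H,
    v x z * px2 T x z - (∫ ξ in (0:ℝ)..z, px2 v x ξ) * pz2 T x z
      = κx * px2 (px2 T) x z + κz * pz2 (pz2 T) x z
        + ((T₁ - T₀) / H) * ∫ ξ in (0:ℝ)..z, px2 v x ξ
  bc_v0 : ∀ x : ℝ, pz2 v x 0 = 0
  bc_vH : ∀ x : ℝ, pz2 v x H = 0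
  bc_T0 : ∀ x : ℝ, T x 0 = 0
  bc_TH : ∀ x : ℝ, T x H = 0
  mean_v : ∀ x : ℝ, (∫ z in (0:ℝ)..H, v x z) = 0


namespace PPE

open MeasureTheory intervalIntegral Set Filter

abbrev unc (f : ℝ → ℝ → ℝ) : ℝ × ℝ → ℝ := fun p => f p.1 p.2





variable {f : ℝ → ℝ → ℝ}

lemma hasDerivAt_px (hf : ContDiff ℝ (⊤ : ℕ∞) (unc f)) (x z : ℝ) :
    HasDerivAt (fun y => f y z) (px2 f x z) x := by
  have h1 : HasDerivAt (fun y : ℝ => (y, z)) ((1 : ℝ), (0 : ℝ)) x := by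
    simpa using (hasDerivAt_id x).prodMk (hasDerivAt_const x z)
  have h2 : HasFDerivAt (unc f) (fderiv ℝ (unc f) (x, z)) (x, z) :=
    (hf.differentiable (by simp) (x, z)).hasFDerivAt
  have h3 : HasDerivAt (fun y => f y z) (fderiv ℝ (unc f) (x, z) (1, 0)) x :=
    by have := h2.comp_hasDerivAt x h1; exact this
  simpa [px2, h3.deriv] using h3

lemma px2_eq_fderiv (hf : ContDiff ℝ (⊤ : ℕ∞) (unc f)) (x z : ℝ) :
    px2 f x z = fderiv ℝ (unc f) (x, z) (1, 0) := by
  have h1 : HasDerivAt (fun y : ℝ => (y, z)) ((1 : ℝ), (0 : ℝ)) x := by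
    simpa using (hasDerivAt_id x).prodMk (hasDerivAt_const x z)
  have h2 := ((hf.differentiable (by simp) (x, z)).hasFDerivAt).comp_hasDerivAt x h1
  simpa [px2, Function.comp_def, unc] using h2.deriv

lemma hasDerivAt_pz (hf : ContDiff ℝ (⊤ : ℕ∞) (unc f)) (x z : ℝ) :
    HasDerivAt (fun w => f x w) (pz2 f x z) z := by
  have h1 : HasDerivAt (fun w : ℝ => (x, w)) ((0 : ℝ), (1 : ℝ)) z := by
    simpa using (hasDerivAt_const z x).prodMk (hasDerivAt_id z)
  have h2 := ((hf.differentiable (by simp) (x, z)).hasFDerivAt).comp_hasDerivAt z h1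
  have h3 : HasDerivAt (fun w => f x w) (fderiv ℝ (unc f) (x, z) (0, 1)) z := h2
  simpa [pz2, h3.deriv] using h3

lemma pz2_eq_fderiv (hf : ContDiff ℝ (⊤ : ℕ∞) (unc f)) (x z : ℝ) :
    pz2 f x z = fderiv ℝ (unc f) (x, z) (0, 1) := by
  have h1 : HasDerivAt (fun w : ℝ => (x, w)) ((0 : ℝ), (1 : ℝ)) z := by
    simpa using (hasDerivAt_const z x).prodMk (hasDerivAt_id z)
  have h2 := ((hf.differentiable (by simp) (x, z)).hasFDerivAt).comp_hasDerivAt z h1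
  simpa [pz2, Function.comp_def, unc] using h2.deriv

lemma contDiff_px2 (hf : ContDiff ℝ (⊤ : ℕ∞) (unc f)) :
    ContDiff ℝ (⊤ : ℕ∞) (unc (px2 f)) := by
  have h : ContDiff ℝ (⊤ : ℕ∞) (fun p : ℝ × ℝ => fderiv ℝ (unc f) p (1, 0)) :=
    (hf.fderiv_right (by simp)).clm_apply contDiff_const
  have he : (unc (px2 f)) = fun p : ℝ × ℝ => fderiv ℝ (unc f) p (1, 0) := by
    funext p; exact px2_eq_fderiv hf p.1 p.2
  rw [he]; exact h

lemma contDiff_pz2 (hf : ContDiff ℝ (⊤ : ℕ∞) (unc f)) :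
    ContDiff ℝ (⊤ : ℕ∞) (unc (pz2 f)) := by
  have h : ContDiff ℝ (⊤ : ℕ∞) (fun p : ℝ × ℝ => fderiv ℝ (unc f) p (0, 1)) :=
    (hf.fderiv_right (by simp)).clm_apply contDiff_const
  have he : (unc (pz2 f)) = fun p : ℝ × ℝ => fderiv ℝ (unc f) p (0, 1) := by
    funext p; exact pz2_eq_fderiv hf p.1 p.2
  rw [he]; exact h






/-- Differentiation under the interval integral sign. -/
lemma hasDerivAt_param_integral {f g : ℝ → ℝ → ℝ}
    (hf : Continuous (unc f)) (hg : Continuous (unc g))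
    (hder : ∀ x z, HasDerivAt (fun y => f y z) (g x z) x) (b x₀ : ℝ) :
    HasDerivAt (fun x => ∫ z in (0:ℝ)..b, f x z) (∫ z in (0:ℝ)..b, g x₀ z) x₀ := by
  obtain ⟨C, hC⟩ : ∃ C, ∀ p ∈ (Icc (x₀ - 1) (x₀ + 1)) ×ˢ (uIcc (0:ℝ) b), ‖unc g p‖ ≤ C :=
    (isCompact_Icc.prod isCompact_uIcc).exists_bound_of_continuousOn hg.continuousOn
  refine (intervalIntegral.hasDerivAt_integral_of_dominated_loc_of_deriv_le
      (F := f) (F' := g) (bound := fun _ => C) (Metric.ball_mem_nhds x₀ one_pos)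
      (Filter.Eventually.of_forall fun x =>
        ((hf.comp (Continuous.prodMk_right x)).aestronglyMeasurable))
      ((hf.comp (Continuous.prodMk_right x₀)).intervalIntegrable 0 b)
      ((hg.comp (Continuous.prodMk_right x₀)).aestronglyMeasurable)
      (Filter.Eventually.of_forall fun t ht x hx => ?_)
      (intervalIntegrable_const)
      (Filter.Eventually.of_forall fun t ht x hx => hder x t)).2
  have hx' : x ∈ Icc (x₀ - 1) (x₀ + 1) := by
    have := Metric.mem_ball.mp hx
    rw [Real.dist_eq] at this
    have h2 := abs_lt.mp this
    constructor <;> linarith [h2.1, h2.2]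
  exact hC (x, t) ⟨hx', uIoc_subset_uIcc ht⟩

/-- Joint continuity of a parametric primitive. -/
lemma continuous_param_integral {g : ℝ → ℝ → ℝ} (hg : Continuous (unc g)) (b : ℝ) :
    Continuous fun x => ∫ z in (0:ℝ)..b, g x z :=
  intervalIntegral.continuous_parametric_intervalIntegral_of_continuous' (μ := volume)
    (f := g) hg 0 b

/-- Integral over a period of the x-derivative of a periodic quantity vanishes. -/
lemma integral_deriv_zero_of_periodic {f g : ℝ → ℝ → ℝ}
    (hf : Continuous (unc f)) (hg : Continuous (unc g))
    (hder : ∀ x z, HasDerivAt (fun y => f y z) (g x z) x) (b L : ℝ)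
    (hper : ∀ z, f L z = f 0 z) :
    (∫ x in (0:ℝ)..L, ∫ z in (0:ℝ)..b, g x z) = 0 := by
  have h1 : (∫ x in (0:ℝ)..L, ∫ z in (0:ℝ)..b, g x z)
      = (∫ z in (0:ℝ)..b, f L z) - (∫ z in (0:ℝ)..b, f 0 z) := by
    refine intervalIntegral.integral_eq_sub_of_hasDerivAt
      (fun x _ => hasDerivAt_param_integral hf hg hder b x) ?_
    exact (continuous_param_integral hg b).intervalIntegrable 0 L
  rw [h1]
  have : (∫ z in (0:ℝ)..b, f L z) = (∫ z in (0:ℝ)..b, f 0 z) :=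
    intervalIntegral.integral_congr fun z _ => hper z
  rw [this, sub_self]





lemma zero_of_nonneg_of_integral_zero {h : ℝ → ℝ} {b : ℝ} (hb : 0 < b)
    (hc : Continuous h) (hnn : ∀ t, 0 ≤ h t) (hz : (∫ t in (0:ℝ)..b, h t) = 0) :
    ∀ t ∈ Icc (0:ℝ) b, h t = 0 := by
  have hae : h =ᵐ[volume.restrict (Ioc (0:ℝ) b)] 0 :=
    (intervalIntegral.integral_eq_zero_iff_of_le_of_nonneg_ae hb.le
      (Eventually.of_forall fun t => hnn t) (hc.intervalIntegrable 0 b)).mp hz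
  have hms : MeasurableSet {t : ℝ | h t ≠ 0} := by
    have : MeasurableSet (h ⁻¹' {0}) := hc.measurable (measurableSet_singleton 0)
    simpa [Set.preimage, Set.compl_setOf] using this.compl
  have h0 : volume ({t : ℝ | h t ≠ 0} ∩ Ioc 0 b) = 0 := by
    have h1 : volume.restrict (Ioc (0:ℝ) b) {t : ℝ | h t ≠ 0} = 0 := by
      have := hae
      rw [EventuallyEq, ae_iff] at this
      simpa using this
    rwa [Measure.restrict_apply hms] at h1
  intro t₀ ht₀
  by_contra hne
  have hpos : 0 < h t₀ := lt_of_le_of_ne (hnn t₀) (Ne.symm hne)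
  have hev : ∀ᶠ t in nhds t₀, 0 < h t := (hc.continuousAt).eventually (eventually_gt_nhds hpos)
  obtain ⟨δ, hδpos, hδ⟩ := Metric.eventually_nhds_iff.mp hev
  set u := max 0 (t₀ - δ) with hu
  set w := min b (t₀ + δ) with hw
  have huw : u < w := by
    rw [hu, hw, max_lt_iff, lt_min_iff, lt_min_iff]
    obtain ⟨h1, h2⟩ := ht₀
    exact ⟨⟨hb, by linarith⟩, ⟨by linarith, by linarith⟩⟩
  have hsub : Ioo u w ⊆ {t : ℝ | h t ≠ 0} ∩ Ioc 0 b := by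
    intro t ht
    have h1 : max 0 (t₀ - δ) < t := ht.1
    have h2 : t < min b (t₀ + δ) := ht.2
    rw [max_lt_iff] at h1; rw [lt_min_iff] at h2
    refine ⟨?_, ⟨h1.1, h2.1.le⟩⟩
    have : dist t t₀ < δ := by
      rw [Real.dist_eq, abs_lt]; constructor <;> linarith [h1.2, h2.2]
    exact (hδ this).ne'
  have hle : volume (Ioo u w) ≤ volume ({t : ℝ | h t ≠ 0} ∩ Ioc 0 b) := measure_mono hsub
  rw [h0, Real.volume_Ioo] at hle
  simp only [nonpos_iff_eq_zero, ENNReal.ofReal_eq_zero] at hle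
  linarith






lemma hasDerivAt_primitive {h : ℝ → ℝ} (hc : Continuous h) (z : ℝ) :
    HasDerivAt (fun w => ∫ t in (0:ℝ)..w, h t) (h z) z :=
  intervalIntegral.integral_hasDerivAt_right (hc.intervalIntegrable 0 z)
    (hc.stronglyMeasurableAtFilter _ _) hc.continuousAt

lemma deriv_periodic {f : ℝ → ℝ} {L : ℝ} (hper : ∀ y, f (y + L) = f y)
    (hd : Differentiable ℝ f) (x : ℝ) : deriv f (x + L) = deriv f x := by
  have hinner : HasDerivAt (fun y : ℝ => y + L) 1 x := (hasDerivAt_id x).add_const L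
  have h1 : HasDerivAt (fun y => f (y + L)) (deriv f (x + L) * 1) x :=
    ((hd (x + L)).hasDerivAt).comp x hinner
  rw [mul_one] at h1
  have h2 : (fun y => f (y + L)) = f := funext hper
  rw [h2] at h1
  exact (h1.deriv).symm

lemma continuous_param_integral' {g : ℝ → ℝ → ℝ} (hg : Continuous (unc g)) (c d : ℝ) :
    Continuous fun x => ∫ z in c..d, g x z :=
  intervalIntegral.continuous_parametric_intervalIntegral_of_continuous' (μ := volume)
    (f := g) hg c d

lemma double_add {f g : ℝ → ℝ → ℝ} (hf : Continuous (unc f)) (hg : Continuous (unc g))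
    {a b c d : ℝ} :
    (∫ x in a..b, ∫ z in c..d, (f x z + g x z))
      = (∫ x in a..b, ∫ z in c..d, f x z) + (∫ x in a..b, ∫ z in c..d, g x z) := by
  have h1 : ∀ x, (∫ z in c..d, (f x z + g x z))
      = (∫ z in c..d, f x z) + (∫ z in c..d, g x z) := fun x =>
    intervalIntegral.integral_add
      ((hf.comp (Continuous.prodMk_right x)).intervalIntegrable _ _)
      ((hg.comp (Continuous.prodMk_right x)).intervalIntegrable _ _)
  rw [intervalIntegral.integral_congr (fun x _ => h1 x)]
  exact intervalIntegral.integral_add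
    ((continuous_param_integral' hf c d).intervalIntegrable _ _)
    ((continuous_param_integral' hg c d).intervalIntegrable _ _)

lemma double_sub {f g : ℝ → ℝ → ℝ} (hf : Continuous (unc f)) (hg : Continuous (unc g))
    {a b c d : ℝ} :
    (∫ x in a..b, ∫ z in c..d, (f x z - g x z))
      = (∫ x in a..b, ∫ z in c..d, f x z) - (∫ x in a..b, ∫ z in c..d, g x z) := by
  have h1 : ∀ x, (∫ z in c..d, (f x z - g x z))
      = (∫ z in c..d, f x z) - (∫ z in c..d, g x z) := fun x =>
    intervalIntegral.integral_sub
      ((hf.comp (Continuous.prodMk_right x)).intervalIntegrable _ _)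
      ((hg.comp (Continuous.prodMk_right x)).intervalIntegrable _ _)
  rw [intervalIntegral.integral_congr (fun x _ => h1 x)]
  exact intervalIntegral.integral_sub
    ((continuous_param_integral' hf c d).intervalIntegrable _ _)
    ((continuous_param_integral' hg c d).intervalIntegrable _ _)

lemma double_const_mul (r : ℝ) (f : ℝ → ℝ → ℝ) {a b c d : ℝ} :
    (∫ x in a..b, ∫ z in c..d, r * f x z)
      = r * ∫ x in a..b, ∫ z in c..d, f x z := by
  have h1 : ∀ x, (∫ z in c..d, r * f x z) = r * ∫ z in c..d, f x z := fun x =>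
    intervalIntegral.integral_const_mul r _
  rw [intervalIntegral.integral_congr (fun x _ => h1 x)]
  exact intervalIntegral.integral_const_mul r _

lemma double_nonneg {f : ℝ → ℝ → ℝ} {b d : ℝ} (hb : 0 ≤ b) (hd : 0 ≤ d)
    (hf : ∀ x z, 0 ≤ f x z) :
    0 ≤ ∫ x in (0:ℝ)..b, ∫ z in (0:ℝ)..d, f x z :=
  intervalIntegral.integral_nonneg hb fun x _ =>
    intervalIntegral.integral_nonneg hd fun z _ => hf x z



def prim (f : ℝ → ℝ → ℝ) : ℝ → ℝ → ℝ := fun x z => ∫ ξ in (0:ℝ)..z, f x ξ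

lemma continuous_prim {f : ℝ → ℝ → ℝ} (hf : Continuous (unc f)) :
    Continuous (unc (prim f)) :=
  continuous_parametric_primitive_of_continuous (μ := volume) (f := f) hf

lemma prim_zero (f : ℝ → ℝ → ℝ) (x : ℝ) : prim f x 0 = 0 :=
  intervalIntegral.integral_same

lemma hasDerivAt_prim_z {f : ℝ → ℝ → ℝ} (hf : Continuous (unc f)) (x z : ℝ) :
    HasDerivAt (fun w => prim f x w) (f x z) z :=
  hasDerivAt_primitive (hf.comp (Continuous.prodMk_right x)) z

lemma hasDerivAt_prim_x {f g : ℝ → ℝ → ℝ}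
    (hf : Continuous (unc f)) (hg : Continuous (unc g))
    (hder : ∀ x z, HasDerivAt (fun y => f y z) (g x z) x) (z x : ℝ) :
    HasDerivAt (fun y => prim f y z) (prim g x z) x :=
  hasDerivAt_param_integral hf hg hder z x

end PPE

open PPE MeasureTheory intervalIntegral Set Filter

/-- Characterization of steady states in the stable case T₁ ≥ T₀:
every smooth steady solution of the perturbation primitive equations vanishes
identically on Ω. -/
theorem steady_states_stable_case
    (νx νz κx κz g ρ₀ β H L T₀ T₁ : ℝ)
    (hνx : 0 < νx) (hνz : 0 < νz) (hκx : 0 < κx) (hκz : 0 < κz)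
    (hg : 0 < g) (hρ₀ : 0 < ρ₀) (hβ : 0 < β) (hH : 0 < H) (hL : 0 < L)
    (hT : T₀ ≤ T₁)
    (v T : ℝ → ℝ → ℝ) (q : ℝ → ℝ)
    (hsol : SteadySolution νx νz κx κz g ρ₀ β H L T₀ T₁ v T q) :
    ∀ (x : ℝ), ∀ z ∈ Set.Icc (0:ℝ) H, v x z = 0 ∧ T x z = 0 := by
  obtain ⟨hv, hT, hq, pv, pT, pq, mom, heat, bv0, bvH, bT0, bTH, mv⟩ := hsol
  -- continuity of all derived fields
  have cv : Continuous (unc v) := hv.continuous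
  have cT : Continuous (unc T) := hT.continuous
  have cvx : Continuous (unc (px2 v)) := (contDiff_px2 hv).continuous
  have cvz : Continuous (unc (pz2 v)) := (contDiff_pz2 hv).continuous
  have cvxx : Continuous (unc (px2 (px2 v))) := (contDiff_px2 (contDiff_px2 hv)).continuous
  have cvzz : Continuous (unc (pz2 (pz2 v))) := (contDiff_pz2 (contDiff_pz2 hv)).continuous
  have cTx : Continuous (unc (px2 T)) := (contDiff_px2 hT).continuous
  have cTz : Continuous (unc (pz2 T)) := (contDiff_pz2 hT).continuous
  have cTxx : Continuous (unc (px2 (px2 T))) := (contDiff_px2 (contDiff_px2 hT)).continuous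
  have cTzz : Continuous (unc (pz2 (pz2 T))) := (contDiff_pz2 (contDiff_pz2 hT)).continuous
  have cW : Continuous (unc (prim (px2 v))) := continuous_prim cvx
  have cG : Continuous (unc (prim T)) := continuous_prim cT
  have cGT : Continuous (unc (prim (px2 T))) := continuous_prim cTx
  -- derivative facts
  have dvx : ∀ x z, HasDerivAt (fun y => v y z) (px2 v x z) x := hasDerivAt_px hv
  have dvz : ∀ x z, HasDerivAt (fun w => v x w) (pz2 v x z) z := hasDerivAt_pz hv
  have dTx : ∀ x z, HasDerivAt (fun y => T y z) (px2 T x z) x := hasDerivAt_px hT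
  have dTz : ∀ x z, HasDerivAt (fun w => T x w) (pz2 T x z) z := hasDerivAt_pz hT
  have dvxx : ∀ x z, HasDerivAt (fun y => px2 v y z) (px2 (px2 v) x z) x :=
    hasDerivAt_px (contDiff_px2 hv)
  have dvzz : ∀ x z, HasDerivAt (fun w => pz2 v x w) (pz2 (pz2 v) x z) z :=
    hasDerivAt_pz (contDiff_pz2 hv)
  have dTxx : ∀ x z, HasDerivAt (fun y => px2 T y z) (px2 (px2 T) x z) x :=
    hasDerivAt_px (contDiff_px2 hT)
  have dTzz : ∀ x z, HasDerivAt (fun w => pz2 T x w) (pz2 (pz2 T) x z) z :=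
    hasDerivAt_pz (contDiff_pz2 hT)
  have dWz : ∀ x z, HasDerivAt (fun w => prim (px2 v) x w) (px2 v x z) z :=
    fun x z => hasDerivAt_prim_z cvx x z
  have dGz : ∀ x z, HasDerivAt (fun w => prim T x w) (T x z) z :=
    fun x z => hasDerivAt_prim_z cT x z
  have dGx : ∀ x z, HasDerivAt (fun y => prim T y z) (prim (px2 T) x z) x :=
    fun x z => hasDerivAt_prim_x cT cTx dTx z x
  have hW0 : ∀ x, prim (px2 v) x 0 = 0 := fun x => prim_zero _ x
  have hWH : ∀ x, prim (px2 v) x H = 0 := by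
    intro x
    have h1 := hasDerivAt_param_integral cv cvx dvx H x
    have h2 : (fun y => ∫ z in (0:ℝ)..H, v y z) = fun _ => (0:ℝ) := funext fun y => mv y
    rw [h2] at h1
    exact h1.unique (hasDerivAt_const x 0)
  -- periodicity facts at x = L versus x = 0
  have vL : ∀ z, v L z = v 0 z := fun z => by have := pv 0 z; rwa [zero_add] at this
  have TL : ∀ z, T L z = T 0 z := fun z => by have := pT 0 z; rwa [zero_add] at this
  have vxL : ∀ z, px2 v L z = px2 v 0 z := by
    intro z
    have hdiff : Differentiable ℝ (fun y => v y z) := fun y => (dvx y z).differentiableAt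
    have h := deriv_periodic (f := fun y => v y z) (L := L) (fun y => pv y z) hdiff 0
    rw [zero_add] at h
    exact h
  have TxL : ∀ z, px2 T L z = px2 T 0 z := by
    intro z
    have hdiff : Differentiable ℝ (fun y => T y z) := fun y => (dTx y z).differentiableAt
    have h := deriv_periodic (f := fun y => T y z) (L := L) (fun y => pT y z) hdiff 0
    rw [zero_add] at h
    exact h
  have GLp : ∀ z, prim T L z = prim T 0 z := fun z =>
    intervalIntegral.integral_congr fun ξ _ => TL ξ
  -- abbreviations for the basic double integrals
  set SA := ∫ x in (0:ℝ)..L, ∫ z in (0:ℝ)..H, px2 v x z * px2 v x z with hSA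
  set SB := ∫ x in (0:ℝ)..L, ∫ z in (0:ℝ)..H, pz2 v x z * pz2 v x z with hSB
  set SC := ∫ x in (0:ℝ)..L, ∫ z in (0:ℝ)..H, px2 T x z * px2 T x z with hSC
  set SD := ∫ x in (0:ℝ)..L, ∫ z in (0:ℝ)..H, pz2 T x z * pz2 T x z with hSD
  set SG := ∫ x in (0:ℝ)..L, ∫ z in (0:ℝ)..H, px2 v x z * prim T x z with hSG
  -- periodicity-based double-integral identities
  have P1 : (∫ x in (0:ℝ)..L, ∫ z in (0:ℝ)..H,
      (px2 v x z * px2 v x z + v x z * px2 (px2 v) x z)) = 0 :=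
    integral_deriv_zero_of_periodic (f := fun x z => v x z * px2 v x z)
      (cv.mul cvx) ((cvx.mul cvx).add (cv.mul cvxx))
      (fun x z => (dvx x z).mul (dvxx x z)) H L (fun z => by simp only [vL, vxL])
  have P2 : (∫ x in (0:ℝ)..L, ∫ z in (0:ℝ)..H,
      (px2 T x z * px2 T x z + T x z * px2 (px2 T) x z)) = 0 :=
    integral_deriv_zero_of_periodic (f := fun x z => T x z * px2 T x z)
      (cT.mul cTx) ((cTx.mul cTx).add (cT.mul cTxx))
      (fun x z => (dTx x z).mul (dTxx x z)) H L (fun z => by simp only [TL, TxL])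
  have P3 : (∫ x in (0:ℝ)..L, ∫ z in (0:ℝ)..H,
      (px2 v x z * prim T x z + v x z * prim (px2 T) x z)) = 0 :=
    integral_deriv_zero_of_periodic (f := fun x z => v x z * prim T x z)
      (cv.mul cG) ((cvx.mul cG).add (cv.mul cGT))
      (fun x z => (dvx x z).mul (dGx x z)) H L (fun z => by simp only [vL, GLp])
  have P4 : (∫ x in (0:ℝ)..L, ∫ z in (0:ℝ)..H, v x z * v x z * px2 v x z) = 0 := by
    refine integral_deriv_zero_of_periodic (f := fun x z => v x z * v x z * v x z / 3)
      (((cv.mul cv).mul cv).div_const 3) ((cv.mul cv).mul cvx)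
      (fun x z => ?_) H L (fun z => by simp only [vL])
    have h := (((dvx x z).mul (dvx x z)).mul (dvx x z)).div_const 3
    refine h.congr_deriv ?_
    simp only [Pi.mul_apply]
    ring
  have P5 : (∫ x in (0:ℝ)..L, ∫ z in (0:ℝ)..H, px2 v x z * (v x z * v x z / 2)) = 0 := by
    refine integral_deriv_zero_of_periodic (f := fun x z => v x z * v x z * v x z / 6)
      (((cv.mul cv).mul cv).div_const 6) (cvx.mul ((cv.mul cv).div_const 2))
      (fun x z => ?_) H L (fun z => by simp only [vL])
    have h := (((dvx x z).mul (dvx x z)).mul (dvx x z)).div_const 6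
    refine h.congr_deriv ?_
    simp only [Pi.mul_apply]
    ring
  have P6 : (∫ x in (0:ℝ)..L, ∫ z in (0:ℝ)..H,
      (px2 v x z * (T x z * T x z / 2) + v x z * (T x z * px2 T x z))) = 0 := by
    refine integral_deriv_zero_of_periodic (f := fun x z => v x z * (T x z * T x z / 2))
      (cv.mul ((cT.mul cT).div_const 2))
      ((cvx.mul ((cT.mul cT).div_const 2)).add (cv.mul (cT.mul cTx)))
      (fun x z => ?_) H L (fun z => by simp only [vL, TL])
    have h := (dvx x z).mul (((dTx x z).mul (dTx x z)).div_const 2)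
    refine h.congr_deriv ?_
    simp only [Pi.mul_apply]
    ring
  -- inner (z-direction) integration by parts identities
  have Iz1 : ∀ x, (∫ z in (0:ℝ)..H, v x z * pz2 (pz2 v) x z)
      = -∫ z in (0:ℝ)..H, pz2 v x z * pz2 v x z := by
    intro x
    have h := intervalIntegral.integral_mul_deriv_eq_deriv_mul (a := (0:ℝ)) (b := H)
      (u := fun z => v x z) (u' := fun z => pz2 v x z)
      (v := fun z => pz2 v x z) (v' := fun z => pz2 (pz2 v) x z)
      (fun z _ => dvz x z) (fun z _ => dvzz x z)
      ((cvz.comp (Continuous.prodMk_right x)).intervalIntegrable _ _)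
      ((cvzz.comp (Continuous.prodMk_right x)).intervalIntegrable _ _)
    simp only [bvH x, bv0 x, mul_zero, mul_zero, sub_zero, zero_sub] at h
    exact h
  have Iz2 : ∀ x, (∫ z in (0:ℝ)..H, T x z * pz2 (pz2 T) x z)
      = -∫ z in (0:ℝ)..H, pz2 T x z * pz2 T x z := by
    intro x
    have h := intervalIntegral.integral_mul_deriv_eq_deriv_mul (a := (0:ℝ)) (b := H)
      (u := fun z => T x z) (u' := fun z => pz2 T x z)
      (v := fun z => pz2 T x z) (v' := fun z => pz2 (pz2 T) x z)
      (fun z _ => dTz x z) (fun z _ => dTzz x z)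
      ((cTz.comp (Continuous.prodMk_right x)).intervalIntegrable _ _)
      ((cTzz.comp (Continuous.prodMk_right x)).intervalIntegrable _ _)
    simp only [bTH x, bT0 x, zero_mul, zero_mul, sub_zero, zero_sub] at h
    exact h
  have dv2 : ∀ x z, HasDerivAt (fun w => v x w * v x w / 2) (v x z * pz2 v x z) z := by
    intro x z
    have h := ((dvz x z).mul (dvz x z)).div_const 2
    refine h.congr_deriv ?_
    ring
  have dT2 : ∀ x z, HasDerivAt (fun w => T x w * T x w / 2) (T x z * pz2 T x z) z := by
    intro x z
    have h := ((dTz x z).mul (dTz x z)).div_const 2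
    refine h.congr_deriv ?_
    ring
  have Iz3 : ∀ x, (∫ z in (0:ℝ)..H, prim (px2 v) x z * (v x z * pz2 v x z))
      = -∫ z in (0:ℝ)..H, px2 v x z * (v x z * v x z / 2) := by
    intro x
    have h := intervalIntegral.integral_mul_deriv_eq_deriv_mul (a := (0:ℝ)) (b := H)
      (u := fun z => prim (px2 v) x z) (u' := fun z => px2 v x z)
      (v := fun z => v x z * v x z / 2) (v' := fun z => v x z * pz2 v x z)
      (fun z _ => dWz x z) (fun z _ => dv2 x z)
      ((cvx.comp (Continuous.prodMk_right x)).intervalIntegrable _ _)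
      (((cv.comp (Continuous.prodMk_right x)).mul
        (cvz.comp (Continuous.prodMk_right x))).intervalIntegrable _ _)
    simp only [hWH x, hW0 x, zero_mul, zero_mul, sub_zero, zero_sub] at h
    exact h
  have Iz4 : ∀ x, (∫ z in (0:ℝ)..H, prim (px2 v) x z * (T x z * pz2 T x z))
      = -∫ z in (0:ℝ)..H, px2 v x z * (T x z * T x z / 2) := by
    intro x
    have h := intervalIntegral.integral_mul_deriv_eq_deriv_mul (a := (0:ℝ)) (b := H)
      (u := fun z => prim (px2 v) x z) (u' := fun z => px2 v x z)
      (v := fun z => T x z * T x z / 2) (v' := fun z => T x z * pz2 T x z)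
      (fun z _ => dWz x z) (fun z _ => dT2 x z)
      ((cvx.comp (Continuous.prodMk_right x)).intervalIntegrable _ _)
      (((cT.comp (Continuous.prodMk_right x)).mul
        (cTz.comp (Continuous.prodMk_right x))).intervalIntegrable _ _)
    simp only [hWH x, hW0 x, zero_mul, zero_mul, sub_zero, zero_sub] at h
    exact h
  have Iz5 : ∀ x, (∫ z in (0:ℝ)..H, prim (px2 v) x z * T x z)
      = -∫ z in (0:ℝ)..H, px2 v x z * prim T x z := by
    intro x
    have h := intervalIntegral.integral_mul_deriv_eq_deriv_mul (a := (0:ℝ)) (b := H)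
      (u := fun z => prim (px2 v) x z) (u' := fun z => px2 v x z)
      (v := fun z => prim T x z) (v' := fun z => T x z)
      (fun z _ => dWz x z) (fun z _ => dGz x z)
      ((cvx.comp (Continuous.prodMk_right x)).intervalIntegrable _ _)
      ((cT.comp (Continuous.prodMk_right x)).intervalIntegrable _ _)
    simp only [hWH x, hW0 x, zero_mul, zero_mul, sub_zero, zero_sub] at h
    exact h
  -- evaluate the individual double integrals
  have e_vxx : (∫ x in (0:ℝ)..L, ∫ z in (0:ℝ)..H, v x z * px2 (px2 v) x z) = -SA := by
    have h := double_add (f := fun x z => px2 v x z * px2 v x z)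
      (g := fun x z => v x z * px2 (px2 v) x z) (cvx.mul cvx) (cv.mul cvxx)
      (a := (0:ℝ)) (b := L) (c := (0:ℝ)) (d := H)
    rw [P1] at h
    rw [hSA]
    linarith
  have e_Txx : (∫ x in (0:ℝ)..L, ∫ z in (0:ℝ)..H, T x z * px2 (px2 T) x z) = -SC := by
    have h := double_add (f := fun x z => px2 T x z * px2 T x z)
      (g := fun x z => T x z * px2 (px2 T) x z) (cTx.mul cTx) (cT.mul cTxx)
      (a := (0:ℝ)) (b := L) (c := (0:ℝ)) (d := H)
    rw [P2] at h
    rw [hSC]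
    linarith
  have e_vGT : (∫ x in (0:ℝ)..L, ∫ z in (0:ℝ)..H, v x z * prim (px2 T) x z) = -SG := by
    have h := double_add (f := fun x z => px2 v x z * prim T x z)
      (g := fun x z => v x z * prim (px2 T) x z) (cvx.mul cG) (cv.mul cGT)
      (a := (0:ℝ)) (b := L) (c := (0:ℝ)) (d := H)
    rw [P3] at h
    rw [hSG]
    linarith
  have e_vzz : (∫ x in (0:ℝ)..L, ∫ z in (0:ℝ)..H, v x z * pz2 (pz2 v) x z) = -SB := by
    rw [intervalIntegral.integral_congr
      (g := fun x => -∫ z in (0:ℝ)..H, pz2 v x z * pz2 v x z) (fun x _ => Iz1 x),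
      intervalIntegral.integral_neg, hSB]
  have e_Tzz : (∫ x in (0:ℝ)..L, ∫ z in (0:ℝ)..H, T x z * pz2 (pz2 T) x z) = -SD := by
    rw [intervalIntegral.integral_congr
      (g := fun x => -∫ z in (0:ℝ)..H, pz2 T x z * pz2 T x z) (fun x _ => Iz2 x),
      intervalIntegral.integral_neg, hSD]
  have e_WT : (∫ x in (0:ℝ)..L, ∫ z in (0:ℝ)..H, prim (px2 v) x z * T x z) = -SG := by
    rw [intervalIntegral.integral_congr
      (g := fun x => -∫ z in (0:ℝ)..H, px2 v x z * prim T x z) (fun x _ => Iz5 x),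
      intervalIntegral.integral_neg, hSG]
  have e_Wvvz : (∫ x in (0:ℝ)..L, ∫ z in (0:ℝ)..H,
      prim (px2 v) x z * (v x z * pz2 v x z)) = 0 := by
    rw [intervalIntegral.integral_congr
      (g := fun x => -∫ z in (0:ℝ)..H, px2 v x z * (v x z * v x z / 2)) (fun x _ => Iz3 x),
      intervalIntegral.integral_neg, P5, neg_zero]
  have e_WTTz : (∫ x in (0:ℝ)..L, ∫ z in (0:ℝ)..H,
      prim (px2 v) x z * (T x z * pz2 T x z))
      = -(∫ x in (0:ℝ)..L, ∫ z in (0:ℝ)..H, px2 v x z * (T x z * T x z / 2)) := by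
    rw [intervalIntegral.integral_congr
      (g := fun x => -∫ z in (0:ℝ)..H, px2 v x z * (T x z * T x z / 2)) (fun x _ => Iz4 x),
      intervalIntegral.integral_neg]
  have e_vTTx : (∫ x in (0:ℝ)..L, ∫ z in (0:ℝ)..H, v x z * (T x z * px2 T x z))
      = -(∫ x in (0:ℝ)..L, ∫ z in (0:ℝ)..H, px2 v x z * (T x z * T x z / 2)) := by
    have h := double_add (f := fun x z => px2 v x z * (T x z * T x z / 2))
      (g := fun x z => v x z * (T x z * px2 T x z))
      (cvx.mul ((cT.mul cT).div_const 2)) (cv.mul (cT.mul cTx))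
      (a := (0:ℝ)) (b := L) (c := (0:ℝ)) (d := H)
    rw [P6] at h
    linarith
  have e_q : (∫ x in (0:ℝ)..L, ∫ z in (0:ℝ)..H, v x z * deriv q x) = 0 := by
    have h1 : ∀ x : ℝ, (∫ z in (0:ℝ)..H, v x z * deriv q x) = 0 := by
      intro x
      rw [intervalIntegral.integral_mul_const, mv x, zero_mul]
    rw [intervalIntegral.integral_congr (g := fun _ => (0:ℝ)) (fun x _ => h1 x)]
    simp
  -- the momentum energy identity
  have mom' : ∀ x : ℝ, ∀ z ∈ Set.Icc (0:ℝ) H,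
      v x z * v x z * px2 v x z - prim (px2 v) x z * (v x z * pz2 v x z)
        = νx * (v x z * px2 (px2 v) x z) + νz * (v x z * pz2 (pz2 v) x z)
          - g * ρ₀ * β * (v x z * prim (px2 T) x z) - v x z * deriv q x := by
    intro x z hz
    have hm := mom x z hz
    have hg1 : px2 (fun x z => ∫ ξ in (0:ℝ)..z, T x ξ) x z = prim (px2 T) x z :=
      (dGx x z).deriv
    rw [hg1] at hm
    rw [show (∫ ξ in (0:ℝ)..z, px2 v x ξ) = prim (px2 v) x z from rfl] at hm
    linear_combination (v x z) * hm
  have momInner : ∀ x : ℝ,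
      (∫ z in (0:ℝ)..H, (v x z * v x z * px2 v x z
          - prim (px2 v) x z * (v x z * pz2 v x z)))
        = ∫ z in (0:ℝ)..H, (νx * (v x z * px2 (px2 v) x z)
            + νz * (v x z * pz2 (pz2 v) x z)
            - g * ρ₀ * β * (v x z * prim (px2 T) x z) - v x z * deriv q x) :=
    fun x => intervalIntegral.integral_congr fun z hz =>
      mom' x z (by rwa [uIcc_of_le hH.le] at hz)
  have momL : (∫ x in (0:ℝ)..L, ∫ z in (0:ℝ)..H, (v x z * v x z * px2 v x z
      - prim (px2 v) x z * (v x z * pz2 v x z))) = 0 := by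
    rw [double_sub (f := fun x z => v x z * v x z * px2 v x z)
      (g := fun x z => prim (px2 v) x z * (v x z * pz2 v x z))
      ((cv.mul cv).mul cvx) (cW.mul (cv.mul cvz)), P4, e_Wvvz, sub_zero]
  have cq' : Continuous (deriv q) := hq.continuous_deriv (by exact_mod_cast le_top)
  have momR : (∫ x in (0:ℝ)..L, ∫ z in (0:ℝ)..H, (νx * (v x z * px2 (px2 v) x z)
      + νz * (v x z * pz2 (pz2 v) x z)
      - g * ρ₀ * β * (v x z * prim (px2 T) x z) - v x z * deriv q x))
      = νx * (-SA) + νz * (-SB) - g * ρ₀ * β * (-SG) := by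
    rw [double_sub (f := fun x z => νx * (v x z * px2 (px2 v) x z)
          + νz * (v x z * pz2 (pz2 v) x z)
          - g * ρ₀ * β * (v x z * prim (px2 T) x z))
        (g := fun x z => v x z * deriv q x)
        (((continuous_const.mul (cv.mul cvxx)).add
            (continuous_const.mul (cv.mul cvzz))).sub
          (continuous_const.mul (cv.mul cGT)))
        (cv.mul (cq'.comp continuous_fst)),
      e_q, sub_zero]
    rw [double_sub (f := fun x z => νx * (v x z * px2 (px2 v) x z)
          + νz * (v x z * pz2 (pz2 v) x z))
        (g := fun x z => g * ρ₀ * β * (v x z * prim (px2 T) x z))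
        ((continuous_const.mul (cv.mul cvxx)).add
            (continuous_const.mul (cv.mul cvzz)))
        (continuous_const.mul (cv.mul cGT))]
    rw [double_add (f := fun x z => νx * (v x z * px2 (px2 v) x z))
        (g := fun x z => νz * (v x z * pz2 (pz2 v) x z))
        (continuous_const.mul (cv.mul cvxx))
        (continuous_const.mul (cv.mul cvzz))]
    rw [double_const_mul νx (fun x z => v x z * px2 (px2 v) x z),
      double_const_mul νz (fun x z => v x z * pz2 (pz2 v) x z),
      double_const_mul (g * ρ₀ * β) (fun x z => v x z * prim (px2 T) x z),
      e_vxx, e_vzz, e_vGT]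
  have EM : νx * SA + νz * SB = g * ρ₀ * β * SG := by
    have houter : (∫ x in (0:ℝ)..L, ∫ z in (0:ℝ)..H, (v x z * v x z * px2 v x z
        - prim (px2 v) x z * (v x z * pz2 v x z)))
        = ∫ x in (0:ℝ)..L, ∫ z in (0:ℝ)..H, (νx * (v x z * px2 (px2 v) x z)
            + νz * (v x z * pz2 (pz2 v) x z)
            - g * ρ₀ * β * (v x z * prim (px2 T) x z) - v x z * deriv q x) :=
      intervalIntegral.integral_congr fun x _ => momInner x
    rw [momL, momR] at houter
    linarith
  -- the heat energy identity
  have heat' : ∀ x : ℝ, ∀ z ∈ Set.Icc (0:ℝ) H,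
      v x z * (T x z * px2 T x z) - prim (px2 v) x z * (T x z * pz2 T x z)
        = κx * (T x z * px2 (px2 T) x z) + κz * (T x z * pz2 (pz2 T) x z)
          + ((T₁ - T₀) / H) * (prim (px2 v) x z * T x z) := by
    intro x z hz
    have hm := heat x z hz
    rw [show (∫ ξ in (0:ℝ)..z, px2 v x ξ) = prim (px2 v) x z from rfl] at hm
    linear_combination (T x z) * hm
  have heatInner : ∀ x : ℝ,
      (∫ z in (0:ℝ)..H, (v x z * (T x z * px2 T x z)
          - prim (px2 v) x z * (T x z * pz2 T x z)))
        = ∫ z in (0:ℝ)..H, (κx * (T x z * px2 (px2 T) x z)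
            + κz * (T x z * pz2 (pz2 T) x z)
            + ((T₁ - T₀) / H) * (prim (px2 v) x z * T x z)) :=
    fun x => intervalIntegral.integral_congr fun z hz =>
      heat' x z (by rwa [uIcc_of_le hH.le] at hz)
  have heatL : (∫ x in (0:ℝ)..L, ∫ z in (0:ℝ)..H, (v x z * (T x z * px2 T x z)
      - prim (px2 v) x z * (T x z * pz2 T x z))) = 0 := by
    rw [double_sub (f := fun x z => v x z * (T x z * px2 T x z))
      (g := fun x z => prim (px2 v) x z * (T x z * pz2 T x z))
      (cv.mul (cT.mul cTx)) (cW.mul (cT.mul cTz)), e_vTTx, e_WTTz, sub_self]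
  have heatR : (∫ x in (0:ℝ)..L, ∫ z in (0:ℝ)..H, (κx * (T x z * px2 (px2 T) x z)
      + κz * (T x z * pz2 (pz2 T) x z)
      + ((T₁ - T₀) / H) * (prim (px2 v) x z * T x z)))
      = κx * (-SC) + κz * (-SD) + ((T₁ - T₀) / H) * (-SG) := by
    rw [double_add (f := fun x z => κx * (T x z * px2 (px2 T) x z)
          + κz * (T x z * pz2 (pz2 T) x z))
        (g := fun x z => ((T₁ - T₀) / H) * (prim (px2 v) x z * T x z))
        ((continuous_const.mul (cT.mul cTxx)).add
            (continuous_const.mul (cT.mul cTzz)))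
        (continuous_const.mul (cW.mul cT))]
    rw [double_add (f := fun x z => κx * (T x z * px2 (px2 T) x z))
        (g := fun x z => κz * (T x z * pz2 (pz2 T) x z))
        (continuous_const.mul (cT.mul cTxx))
        (continuous_const.mul (cT.mul cTzz))]
    rw [double_const_mul κx (fun x z => T x z * px2 (px2 T) x z),
      double_const_mul κz (fun x z => T x z * pz2 (pz2 T) x z),
      double_const_mul ((T₁ - T₀) / H) (fun x z => prim (px2 v) x z * T x z),
      e_Txx, e_Tzz, e_WT]
  have EH : κx * SC + κz * SD = -(((T₁ - T₀) / H) * SG) := by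
    have houter : (∫ x in (0:ℝ)..L, ∫ z in (0:ℝ)..H, (v x z * (T x z * px2 T x z)
        - prim (px2 v) x z * (T x z * pz2 T x z)))
        = ∫ x in (0:ℝ)..L, ∫ z in (0:ℝ)..H, (κx * (T x z * px2 (px2 T) x z)
            + κz * (T x z * pz2 (pz2 T) x z)
            + ((T₁ - T₀) / H) * (prim (px2 v) x z * T x z)) :=
      intervalIntegral.integral_congr fun x _ => heatInner x
    rw [heatL, heatR] at houter
    linarith
  -- nonnegativity and sign bookkeeping
  have hSAnn : 0 ≤ SA := by
    rw [hSA]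
    exact double_nonneg (f := fun x z => px2 v x z * px2 v x z) hL.le hH.le
      fun x z => mul_self_nonneg _
  have hSBnn : 0 ≤ SB := by
    rw [hSB]
    exact double_nonneg (f := fun x z => pz2 v x z * pz2 v x z) hL.le hH.le
      fun x z => mul_self_nonneg _
  have hSCnn : 0 ≤ SC := by
    rw [hSC]
    exact double_nonneg (f := fun x z => px2 T x z * px2 T x z) hL.le hH.le
      fun x z => mul_self_nonneg _
  have hSDnn : 0 ≤ SD := by
    rw [hSD]
    exact double_nonneg (f := fun x z => pz2 T x z * pz2 T x z) hL.le hH.le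
      fun x z => mul_self_nonneg _
  have hgpos : 0 < g * ρ₀ * β := by positivity
  have hSGnn : 0 ≤ SG := by
    have h1 : 0 ≤ g * ρ₀ * β * SG := by
      rw [← EM]
      exact add_nonneg (mul_nonneg hνx.le hSAnn) (mul_nonneg hνz.le hSBnn)
    nlinarith only [h1, hgpos]
  have hcnn : 0 ≤ (T₁ - T₀) / H := div_nonneg (by linarith) hH.le
  have hSC0 : SC = 0 := by
    refine le_antisymm ?_ hSCnn
    nlinarith only [EH, hκx, mul_nonneg hκz.le hSDnn, mul_nonneg hcnn hSGnn]
  have hSD0 : SD = 0 := by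
    refine le_antisymm ?_ hSDnn
    nlinarith only [EH, hκz, mul_nonneg hκx.le hSCnn, mul_nonneg hcnn hSGnn]
  -- the temperature vanishes
  have hTzInner : ∀ x ∈ Set.Icc (0:ℝ) L,
      (∫ z in (0:ℝ)..H, pz2 T x z * pz2 T x z) = 0 :=
    zero_of_nonneg_of_integral_zero hL (continuous_param_integral' (cTz.mul cTz) 0 H)
      (fun x => intervalIntegral.integral_nonneg hH.le fun z _ => mul_self_nonneg _)
      (by rw [← hSD]; exact hSD0)
  have hTz0 : ∀ x ∈ Set.Icc (0:ℝ) L, ∀ z ∈ Set.Icc (0:ℝ) H, pz2 T x z = 0 := by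
    intro x hx z hz
    exact mul_self_eq_zero.mp (zero_of_nonneg_of_integral_zero hH
      ((cTz.comp (Continuous.prodMk_right x)).mul (cTz.comp (Continuous.prodMk_right x)))
      (fun z => mul_self_nonneg _) (hTzInner x hx) z hz)
  have hT0' : ∀ x ∈ Set.Icc (0:ℝ) L, ∀ z ∈ Set.Icc (0:ℝ) H, T x z = 0 := by
    intro x hx z hz
    have h1 : (∫ w in (0:ℝ)..z, pz2 T x w) = T x z - T x 0 :=
      intervalIntegral.integral_eq_sub_of_hasDerivAt (fun w _ => dTz x w)
        ((cTz.comp (Continuous.prodMk_right x)).intervalIntegrable _ _)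
    have h2 : (∫ w in (0:ℝ)..z, pz2 T x w) = 0 := by
      rw [intervalIntegral.integral_congr (g := fun _ => (0:ℝ)) (fun w hw => ?_)]
      · simp
      · have hw' : w ∈ Set.Icc (0:ℝ) z := by rwa [uIcc_of_le hz.1] at hw
        exact hTz0 x hx w ⟨hw'.1, hw'.2.trans hz.2⟩
    have h3 := bT0 x
    rw [h2, h3] at h1
    linarith
  have hTall : ∀ (x : ℝ), ∀ z ∈ Set.Icc (0:ℝ) H, T x z = 0 := by
    intro x z hz
    have hper : Function.Periodic (fun y => T y z) L := fun y => pT y z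
    obtain ⟨y, hy, hxy⟩ := hper.exists_mem_Ico hL x 0
    have hy2 : y < L := by simpa using hy.2
    rw [hxy]
    exact hT0' y ⟨hy.1, hy2.le⟩ z hz
  -- hence SG = 0 and the velocity dissipation vanishes
  have hSG0 : SG = 0 := by
    have h1 : ∀ x : ℝ, (∫ z in (0:ℝ)..H, prim (px2 v) x z * T x z) = 0 := by
      intro x
      rw [intervalIntegral.integral_congr (g := fun _ => (0:ℝ)) (fun z hz => ?_)]
      · simp
      · rw [hTall x z (by rwa [uIcc_of_le hH.le] at hz), mul_zero]
    have h2 : (∫ x in (0:ℝ)..L, ∫ z in (0:ℝ)..H, prim (px2 v) x z * T x z) = 0 := by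
      rw [intervalIntegral.integral_congr (g := fun _ => (0:ℝ)) (fun x _ => h1 x)]
      simp
    rw [e_WT] at h2
    linarith
  have hSA0 : SA = 0 := by
    refine le_antisymm ?_ hSAnn
    rw [hSG0, mul_zero] at EM
    nlinarith only [EM, hνx, mul_nonneg hνz.le hSBnn]
  have hSB0 : SB = 0 := by
    refine le_antisymm ?_ hSBnn
    rw [hSG0, mul_zero] at EM
    nlinarith only [EM, hνz, mul_nonneg hνx.le hSAnn]
  -- pointwise vanishing of the velocity derivatives on the period cell
  have hvzInner : ∀ x ∈ Set.Icc (0:ℝ) L,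
      (∫ z in (0:ℝ)..H, pz2 v x z * pz2 v x z) = 0 :=
    zero_of_nonneg_of_integral_zero hL (continuous_param_integral' (cvz.mul cvz) 0 H)
      (fun x => intervalIntegral.integral_nonneg hH.le fun z _ => mul_self_nonneg _)
      (by rw [← hSB]; exact hSB0)
  have hvz0 : ∀ x ∈ Set.Icc (0:ℝ) L, ∀ z ∈ Set.Icc (0:ℝ) H, pz2 v x z = 0 := by
    intro x hx z hz
    exact mul_self_eq_zero.mp (zero_of_nonneg_of_integral_zero hH
      ((cvz.comp (Continuous.prodMk_right x)).mul (cvz.comp (Continuous.prodMk_right x)))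
      (fun z => mul_self_nonneg _) (hvzInner x hx) z hz)
  have hvxInner : ∀ x ∈ Set.Icc (0:ℝ) L,
      (∫ z in (0:ℝ)..H, px2 v x z * px2 v x z) = 0 :=
    zero_of_nonneg_of_integral_zero hL (continuous_param_integral' (cvx.mul cvx) 0 H)
      (fun x => intervalIntegral.integral_nonneg hH.le fun z _ => mul_self_nonneg _)
      (by rw [← hSA]; exact hSA0)
  have hvx0 : ∀ x ∈ Set.Icc (0:ℝ) L, ∀ z ∈ Set.Icc (0:ℝ) H, px2 v x z = 0 := by
    intro x hx z hz
    exact mul_self_eq_zero.mp (zero_of_nonneg_of_integral_zero hH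
      ((cvx.comp (Continuous.prodMk_right x)).mul (cvx.comp (Continuous.prodMk_right x)))
      (fun z => mul_self_nonneg _) (hvxInner x hx) z hz)
  -- extend by periodicity
  have hvzall : ∀ (x : ℝ), ∀ z ∈ Set.Icc (0:ℝ) H, pz2 v x z = 0 := by
    intro x z hz
    have hper : Function.Periodic (fun y => pz2 v y z) L := by
      intro y
      have hfe : (fun w => v (y + L) w) = fun w => v y w := funext fun w => pv y w
      show pz2 v (y + L) z = pz2 v y z
      simp only [pz2, hfe]
    obtain ⟨y, hy, hxy⟩ := hper.exists_mem_Ico hL x 0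
    have hy2 : y < L := by simpa using hy.2
    rw [hxy]
    exact hvz0 y ⟨hy.1, hy2.le⟩ z hz
  have hvxall0 : ∀ x : ℝ, px2 v x 0 = 0 := by
    intro x
    have hper : Function.Periodic (fun y => px2 v y 0) L := by
      intro y
      have hdiff : Differentiable ℝ (fun y => v y 0) := fun y => (dvx y 0).differentiableAt
      exact deriv_periodic (f := fun y => v y 0) (L := L) (fun y => pv y 0) hdiff y
    obtain ⟨y, hy, hxy⟩ := hper.exists_mem_Ico hL x 0
    have hy2 : y < L := by simpa using hy.2
    rw [hxy]
    exact hvx0 y ⟨hy.1, hy2.le⟩ 0 ⟨le_refl 0, hH.le⟩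
  have hv0row : ∀ x : ℝ, v x 0 = v 0 0 := by
    intro x
    exact is_const_of_deriv_eq_zero (fun y => (dvx y 0).differentiableAt)
      (fun y => hvxall0 y) x 0
  have hvcol : ∀ (x : ℝ), ∀ z ∈ Set.Icc (0:ℝ) H, v x z = v x 0 := by
    intro x z hz
    have h1 : (∫ w in (0:ℝ)..z, pz2 v x w) = v x z - v x 0 :=
      intervalIntegral.integral_eq_sub_of_hasDerivAt (fun w _ => dvz x w)
        ((cvz.comp (Continuous.prodMk_right x)).intervalIntegrable _ _)
    have h2 : (∫ w in (0:ℝ)..z, pz2 v x w) = 0 := by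
      rw [intervalIntegral.integral_congr (g := fun _ => (0:ℝ)) (fun w hw => ?_)]
      · simp
      · have hw' : w ∈ Set.Icc (0:ℝ) z := by rwa [uIcc_of_le hz.1] at hw
        exact hvzall x w ⟨hw'.1, hw'.2.trans hz.2⟩
    rw [h2] at h1
    linarith
  have hv00 : v 0 0 = 0 := by
    have h1 : (∫ z in (0:ℝ)..H, v 0 z) = ∫ z in (0:ℝ)..H, v 0 0 :=
      intervalIntegral.integral_congr fun z hz =>
        hvcol 0 z (by rwa [uIcc_of_le hH.le] at hz)
    rw [mv 0, intervalIntegral.integral_const, smul_eq_mul] at h1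
    have h2 : H * v 0 0 = 0 := by linarith [h1]
    exact (mul_eq_zero.mp h2).resolve_left hH.ne'
  intro x z hz
  refine ⟨?_, hTall x z hz⟩
  rw [hvcol x z hz, hv0row x, hv00]
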